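/- Let s ≥ 0. There exists a constant C = C(s) > 0 such that for all nonnegative sequences a, b, c : ℤ → [0,∞), the sequence F : ℤ → [0,∞] defined by F_0 = 0 and, for k ≠ 0, F_k = Σ a(k1)·b(k2)·c(k3)/(|k3|·|φ̃|), where the sum ranges over all triples (k1,k2,k3) ∈ Γ(k) with k3 ≠ 0 and |k1| = max(|k|, |k1|, |k2|, |k3|), satisfies ‖F‖_{H^s} ≤ C·‖a‖_{H^{s−1}}·‖b‖_{H^s}·‖c‖_{H^s} (the inequality holding in [0,∞]). -/

import Mathlib

open scoped ENNReal NNReal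

/-- The `H^s` norm of a sequence indexed by `ℤ`, with values in `[0,∞]`. -/
noncomputable def HsE (s : ℝ) (a : ℤ → ℝ≥0∞) : ℝ≥0∞ :=
  (∑' k : ℤ, ENNReal.ofReal ((1 + (k : ℝ) ^ 2) ^ s) * a k ^ 2) ^ (1 / 2 : ℝ)

/- ### Auxiliary material -/

lemma aux_amgm (x y : ℝ≥0∞) : 2 * (x * y) ≤ x ^ 2 + y ^ 2 := by
  rcases eq_or_ne x ⊤ with hx | hx
  · rcases eq_or_ne y 0 with hy | hy
    · simp [hy]
    · subst hx
      have : (⊤ : ℝ≥0∞) ^ 2 = ⊤ := by simp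
      rw [this]
      exact le_top.trans (le_add_right le_rfl)
  rcases eq_or_ne y ⊤ with hy | hy
  · rcases eq_or_ne x 0 with hx0 | hx0
    · simp [hx0]
    · subst hy
      have : (⊤ : ℝ≥0∞) ^ 2 = ⊤ := by simp
      rw [this]
      exact le_top.trans (le_add_left le_rfl)
  lift x to ℝ≥0 using hx
  lift y to ℝ≥0 using hy
  have : ((2:ℝ≥0) : ℝ≥0∞) * (x * y) ≤ ((x:ℝ≥0∞)) ^ 2 + (y:ℝ≥0∞) ^ 2 := by
    rw [← ENNReal.coe_mul, ← ENNReal.coe_mul, ← ENNReal.coe_pow, ← ENNReal.coe_pow,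
      ← ENNReal.coe_add, ENNReal.coe_le_coe, ← NNReal.coe_le_coe]
    push_cast
    nlinarith [sq_nonneg ((x:ℝ) - (y:ℝ))]
  simpa using this

/-- Cauchy–Schwarz for `tsum` in `ℝ≥0∞`. -/
lemma aux_cs {ι : Type*} (f g : ι → ℝ≥0∞) :
    (∑' i, f i * g i) ^ 2 ≤ (∑' i, f i ^ 2) * (∑' i, g i ^ 2) := by
  have expand : ∀ u v : ι → ℝ≥0∞,
      (∑' i, u i) * (∑' j, v j) = ∑' i, ∑' j, u i * v j := by
    intro u v
    rw [← ENNReal.tsum_mul_right]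
    exact tsum_congr fun i => (ENNReal.tsum_mul_left).symm
  rw [← ENNReal.mul_le_mul_iff_right (a := 2) two_ne_zero ENNReal.ofNat_ne_top]
  calc 2 * (∑' i, f i * g i) ^ 2
      = ∑' i, ∑' j, 2 * ((f i * g i) * (f j * g j)) := by
        rw [pow_two, expand]
        rw [← ENNReal.tsum_mul_left]
        exact tsum_congr fun i => (ENNReal.tsum_mul_left).symm
    _ ≤ ∑' i, ∑' j, ((f i * g j) ^ 2 + (f j * g i) ^ 2) := by
        refine ENNReal.tsum_le_tsum fun i => ENNReal.tsum_le_tsum fun j => ?_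
        have : (f i * g i) * (f j * g j) = (f i * g j) * (f j * g i) := by ring
        rw [this]
        exact aux_amgm _ _
    _ = (∑' i, ∑' j, (f i * g j) ^ 2) + ∑' i, ∑' j, (f j * g i) ^ 2 := by
        rw [← ENNReal.tsum_add]
        exact tsum_congr fun i => ENNReal.tsum_add
    _ = 2 * ((∑' i, f i ^ 2) * (∑' i, g i ^ 2)) := by
        have h1 : (∑' i, ∑' j, (f i * g j) ^ 2) = (∑' i, f i ^ 2) * (∑' i, g i ^ 2) := by
          rw [expand]
          exact tsum_congr fun i => tsum_congr fun j => by rw [mul_pow]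
        have h2 : (∑' i, ∑' j, (f j * g i) ^ 2) = (∑' i, f i ^ 2) * (∑' i, g i ^ 2) := by
          rw [ENNReal.tsum_comm (f := fun i j => (f j * g i) ^ 2), expand]
          exact tsum_congr fun i => tsum_congr fun j => by rw [mul_pow]
        rw [h1, h2, two_mul]

noncomputable def ee (n : ℤ) : ℝ≥0∞ := ENNReal.ofReal (((n:ℝ)^2)⁻¹)

noncomputable def Zc : ℝ≥0∞ := ∑' n : ℤ, ee n

lemma Zc_ne_top : Zc ≠ ⊤ := by
  have hsum : Summable (fun n : ℤ => ((n:ℝ)^2)⁻¹) := by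
    have := (Real.summable_one_div_int_pow (p := 2)).mpr one_lt_two
    simpa [one_div] using this
  have : Zc = ENNReal.ofReal (∑' n : ℤ, ((n:ℝ)^2)⁻¹) := by
    rw [Zc]
    unfold ee
    rw [ENNReal.ofReal_tsum_of_nonneg (fun n => by positivity) hsum]
  rw [this]
  exact ENNReal.ofReal_ne_top

lemma int_key {k1 α β γ : ℤ} (hα : α ≠ 0) (hβ : β ≠ 0) (hγ : γ ≠ 0)
    (h : α + β - γ = 2 * k1) : 1 + k1^2 ≤ 9*α^2*γ^2 + 9*α^2*β^2 := by
  have hα2 : 1 ≤ α^2 := by rcases hα.lt_or_gt with h'|h' <;> nlinarith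
  have hβ2 : 1 ≤ β^2 := by rcases hβ.lt_or_gt with h'|h' <;> nlinarith
  have hγ2 : 1 ≤ γ^2 := by rcases hγ.lt_or_gt with h'|h' <;> nlinarith
  have hsq : (α+β-γ)^2 = 4*k1^2 := by rw [h]; ring
  have h4 : 4*k1^2 ≤ 3*(α^2+β^2+γ^2) := by
    nlinarith [sq_nonneg (α-β), sq_nonneg (α+γ), sq_nonneg (β+γ), hsq]
  nlinarith [mul_nonneg (sub_nonneg.2 hα2) (sub_nonneg.2 hβ2),
    mul_nonneg (sub_nonneg.2 hα2) (sub_nonneg.2 hγ2)]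

lemma boundB {k1 k2 k3 : ℤ} (hαβγ : (k1+k2)*(k1+k3)*(k2+k3) ≠ 0) (h3 : k3 ≠ 0) :
    ENNReal.ofReal (1 + (k1:ℝ)^2) *
      (((k3.natAbs : ℝ≥0∞) * (((3*(k1+k2)*(k1+k3)*(k2+k3)).natAbs : ℝ≥0∞))) ^ 2)⁻¹
      ≤ ee k3 * ee (k1+k3) + ee k3 * ee (k2+k3) := by
  have hα : k1+k2 ≠ 0 := by intro h; apply hαβγ; rw [h]; ring
  have hβ : k1+k3 ≠ 0 := by
    intro h; apply hαβγ; rw [h]; ring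
  have hγ : k2+k3 ≠ 0 := by intro h; apply hαβγ; rw [h]; ring
  set N : ℕ := k3.natAbs * (3*(k1+k2)*(k1+k3)*(k2+k3)).natAbs with hN
  have hNpos : 0 < N :=
    Nat.mul_pos (Int.natAbs_pos.2 h3) (Int.natAbs_pos.2
      (mul_ne_zero (mul_ne_zero (mul_ne_zero three_ne_zero hα) hβ) hγ))
  have hcast : ((k3.natAbs : ℝ≥0∞) * (((3*(k1+k2)*(k1+k3)*(k2+k3)).natAbs : ℝ≥0∞))) = (N : ℝ≥0∞) := by
    rw [hN]; push_cast; ring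
  rw [hcast]
  have h1 : ((N : ℝ≥0∞) ^ 2)⁻¹ = ENNReal.ofReal ((((N:ℕ):ℝ)^2)⁻¹) := by
    rw [← ENNReal.ofReal_natCast N, ← ENNReal.ofReal_pow (by positivity),
      ← ENNReal.ofReal_inv_of_pos (by positivity)]
  rw [h1, ← ENNReal.ofReal_mul (by positivity)]
  unfold ee
  rw [← ENNReal.ofReal_mul (by positivity), ← ENNReal.ofReal_mul (by positivity),
    ← ENNReal.ofReal_add (by positivity) (by positivity)]
  apply ENNReal.ofReal_le_ofReal
  have hNR : ((N:ℕ):ℝ)^2 = 9 * ((k3:ℝ)^2) * (((k1:ℝ)+k2)^2) * (((k1:ℝ)+k3)^2) * (((k2:ℝ)+k3)^2) := by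
    rw [hN]
    push_cast [Nat.cast_natAbs]
    rw [mul_pow]
    rw [sq_abs, sq_abs]
    ring
  have hx3 : (k3:ℝ) ≠ 0 := Int.cast_ne_zero.2 h3
  have hxβ : ((k1:ℝ)+k3) ≠ 0 := by
    have : ((k1+k3 : ℤ):ℝ) ≠ 0 := Int.cast_ne_zero.mpr hβ
    push_cast at this; exact this
  have hxγ : ((k2:ℝ)+k3) ≠ 0 := by
    have : ((k2+k3 : ℤ):ℝ) ≠ 0 := Int.cast_ne_zero.mpr hγ
    push_cast at this; exact this
  have key : (1:ℝ) + (k1:ℝ)^2 ≤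
      9*((k1:ℝ)+k2)^2*((k2:ℝ)+k3)^2 + 9*((k1:ℝ)+k2)^2*((k1:ℝ)+k3)^2 := by
    have h0 := int_key (k1 := k1) hα hβ hγ (by ring)
    have h1 : ((1 + k1^2 : ℤ) : ℝ) ≤ ((9*(k1+k2)^2*(k2+k3)^2 + 9*(k1+k2)^2*(k1+k3)^2 : ℤ) : ℝ) := by
      exact_mod_cast h0
    push_cast at h1
    linarith
  rw [← div_eq_mul_inv, div_le_iff₀ (by positivity), hNR]
  push_cast
  have expand : (((k3:ℝ) ^ 2)⁻¹ * ((((k1:ℝ) + k3) ^ 2)⁻¹) + ((k3:ℝ) ^ 2)⁻¹ * ((((k2:ℝ) + k3) ^ 2)⁻¹)) *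
      (9 * (k3:ℝ) ^ 2 * ((k1:ℝ) + k2) ^ 2 * ((k1:ℝ) + k3) ^ 2 * ((k2:ℝ) + k3) ^ 2)
      = 9*((k1:ℝ)+k2)^2*((k2:ℝ)+k3)^2 + 9*((k1:ℝ)+k2)^2*((k1:ℝ)+k3)^2 := by
    field_simp
  rw [expand]
  exact key

lemma boundA {s : ℝ} (hs : 0 ≤ s) {k k1 k2 k3 : ℤ} (hle : k.natAbs ≤ k1.natAbs) :
    ENNReal.ofReal ((1 + (k:ℝ)^2)^s) *
      (ENNReal.ofReal ((1+(k1:ℝ)^2)^(s-1)) * ENNReal.ofReal ((1+(k2:ℝ)^2)^s) *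
        ENNReal.ofReal ((1+(k3:ℝ)^2)^s))⁻¹
      ≤ ENNReal.ofReal (1 + (k1:ℝ)^2) := by
  set t0 : ℝ := 1 + (k:ℝ)^2 with ht0
  set t1 : ℝ := 1 + (k1:ℝ)^2 with ht1
  set t2 : ℝ := 1 + (k2:ℝ)^2 with ht2
  set t3 : ℝ := 1 + (k3:ℝ)^2 with ht3
  have h0 : (0:ℝ) < t0 := by positivity
  have h1 : (0:ℝ) < t1 := by positivity
  have h2 : (1:ℝ) ≤ t2 := by nlinarith [sq_nonneg (k2:ℝ)]
  have h3 : (1:ℝ) ≤ t3 := by nlinarith [sq_nonneg (k3:ℝ)]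
  have h01 : t0 ≤ t1 := by
    have habs : |(k:ℝ)| ≤ |(k1:ℝ)| := by
      rw [← Int.cast_abs, ← Int.cast_abs]
      have h' : |k| ≤ |k1| := by
        rw [Int.abs_eq_natAbs, Int.abs_eq_natAbs]
        exact_mod_cast hle
      exact_mod_cast h'
    nlinarith [sq_abs (k:ℝ), sq_abs (k1:ℝ), abs_nonneg (k:ℝ)]
  rw [← ENNReal.ofReal_mul (by positivity), ← ENNReal.ofReal_mul (by positivity),
    ← ENNReal.ofReal_inv_of_pos (by positivity), ← ENNReal.ofReal_mul (by positivity)]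
  apply ENNReal.ofReal_le_ofReal
  have key : (t1^(s-1) * t2^s * t3^s)⁻¹ ≤ t1^(1-s) := by
    rw [mul_inv, mul_inv]
    have e1 : (t1^(s-1))⁻¹ = t1^(1-s) := by
      rw [← Real.rpow_neg (le_of_lt h1)]
      norm_num
    rw [e1]
    have i2 : (t2^s)⁻¹ ≤ 1 := by
      rw [inv_le_one_iff₀]
      right
      exact Real.one_le_rpow h2 hs
    have i3 : (t3^s)⁻¹ ≤ 1 := by
      rw [inv_le_one_iff₀]
      right
      exact Real.one_le_rpow h3 hs
    calc t1^(1-s) * (t2^s)⁻¹ * (t3^s)⁻¹ ≤ t1^(1-s) * 1 * 1 := by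
          apply mul_le_mul (mul_le_mul le_rfl i2 (by positivity) (by positivity)) i3
            (by positivity) (by positivity)
      _ = t1^(1-s) := by ring
  calc t0^s * (t1^(s-1) * t2^s * t3^s)⁻¹ ≤ t1^s * t1^(1-s) := by
        apply mul_le_mul (Real.rpow_le_rpow (le_of_lt h0) h01 hs) key (by positivity)
          (by positivity)
    _ = t1 := by
        rw [← Real.rpow_add h1]
        norm_num

/- ### Notation for the proof of the main theorem -/

noncomputable def auxWt (t : ℝ) (k : ℤ) : ℝ≥0∞ := ENNReal.ofReal ((1 + (k:ℝ)^2) ^ t)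

lemma auxWt_ne_zero (t : ℝ) (k : ℤ) : auxWt t k ≠ 0 := by
  unfold auxWt
  exact (ENNReal.ofReal_pos.2 (Real.rpow_pos_of_pos (by positivity) t)).ne'

lemma auxWt_ne_top (t : ℝ) (k : ℤ) : auxWt t k ≠ ⊤ := ENNReal.ofReal_ne_top

def auxCond (k : ℤ) (p : ℤ × ℤ × ℤ) : Prop :=
  p.1 + p.2.1 + p.2.2 = k ∧
    (p.1 + p.2.1) * (p.1 + p.2.2) * (p.2.1 + p.2.2) ≠ 0 ∧
    p.2.2 ≠ 0 ∧
    p.1.natAbs = max k.natAbs (max p.1.natAbs (max p.2.1.natAbs p.2.2.natAbs))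

instance (k : ℤ) (p : ℤ × ℤ × ℤ) : Decidable (auxCond k p) := by
  unfold auxCond; infer_instance

noncomputable def auxW (s : ℝ) (p : ℤ × ℤ × ℤ) : ℝ≥0∞ :=
  auxWt (s-1) p.1 * auxWt s p.2.1 * auxWt s p.2.2

lemma auxW_ne_zero (s : ℝ) (p : ℤ × ℤ × ℤ) : auxW s p ≠ 0 :=
  mul_ne_zero (mul_ne_zero (auxWt_ne_zero _ _) (auxWt_ne_zero _ _)) (auxWt_ne_zero _ _)

lemma auxW_ne_top (s : ℝ) (p : ℤ × ℤ × ℤ) : auxW s p ≠ ⊤ :=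
  ENNReal.mul_ne_top (ENNReal.mul_ne_top (auxWt_ne_top _ _) (auxWt_ne_top _ _)) (auxWt_ne_top _ _)

noncomputable def auxD (p : ℤ × ℤ × ℤ) : ℝ≥0∞ :=
  (p.2.2.natAbs : ℝ≥0∞) *
    (((3 * (p.1 + p.2.1) * (p.1 + p.2.2) * (p.2.1 + p.2.2)).natAbs : ℕ) : ℝ≥0∞)

noncomputable def auxX (s : ℝ) (a b c : ℤ → ℝ≥0) (k : ℤ) (p : ℤ × ℤ × ℤ) : ℝ≥0∞ :=
  if auxCond k p then
    (a p.1 : ℝ≥0∞) * (b p.2.1 : ℝ≥0∞) * (c p.2.2 : ℝ≥0∞) * (auxW s p) ^ (1/2 : ℝ) else 0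

noncomputable def auxY (s : ℝ) (k : ℤ) (p : ℤ × ℤ × ℤ) : ℝ≥0∞ :=
  if auxCond k p then (auxW s p) ^ (-(1/2) : ℝ) * (auxD p)⁻¹ else 0

lemma aux_xy (s : ℝ) (a b c : ℤ → ℝ≥0) (k : ℤ) (p : ℤ × ℤ × ℤ) :
    (if auxCond k p then
      (a p.1 : ℝ≥0∞) * (b p.2.1 : ℝ≥0∞) * (c p.2.2 : ℝ≥0∞) / auxD p else 0)
    = auxX s a b c k p * auxY s k p := by
  unfold auxX auxY
  by_cases h : auxCond k p
  · rw [if_pos h, if_pos h, if_pos h]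
    have hWW : (auxW s p) ^ (1/2 : ℝ) * (auxW s p) ^ (-(1/2) : ℝ) = 1 := by
      rw [← ENNReal.rpow_add _ _ (auxW_ne_zero s p) (auxW_ne_top s p)]
      norm_num
    calc (a p.1 : ℝ≥0∞) * (b p.2.1 : ℝ≥0∞) * (c p.2.2 : ℝ≥0∞) / auxD p
        = ((auxW s p) ^ (1/2 : ℝ) * (auxW s p) ^ (-(1/2) : ℝ)) *
            ((a p.1 : ℝ≥0∞) * (b p.2.1 : ℝ≥0∞) * (c p.2.2 : ℝ≥0∞) * (auxD p)⁻¹) := by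
          rw [hWW, one_mul, div_eq_mul_inv]
      _ = (a p.1 : ℝ≥0∞) * (b p.2.1 : ℝ≥0∞) * (c p.2.2 : ℝ≥0∞) * (auxW s p) ^ (1/2 : ℝ) *
            ((auxW s p) ^ (-(1/2) : ℝ) * (auxD p)⁻¹) := by ring
  · rw [if_neg h, if_neg h, if_neg h, zero_mul]

noncomputable def auxG (s : ℝ) (a b c : ℤ → ℝ≥0) (p : ℤ × ℤ × ℤ) : ℝ≥0∞ :=
  (auxWt (s-1) p.1 * (a p.1 : ℝ≥0∞)^2) * (auxWt s p.2.1 * (b p.2.1 : ℝ≥0∞)^2) *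
    (auxWt s p.2.2 * (c p.2.2 : ℝ≥0∞)^2)

lemma aux_x_sq (s : ℝ) (a b c : ℤ → ℝ≥0) (k : ℤ) (p : ℤ × ℤ × ℤ) :
    auxX s a b c k p ^ 2 = if auxCond k p then auxG s a b c p else 0 := by
  unfold auxX
  by_cases h : auxCond k p
  · rw [if_pos h, if_pos h]
    have hW : ((auxW s p) ^ (1/2 : ℝ)) ^ 2 = auxW s p := by
      rw [← ENNReal.rpow_natCast ((auxW s p) ^ (1/2 : ℝ)) 2, ← ENNReal.rpow_mul]
      norm_num
    rw [mul_pow, hW]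
    unfold auxG auxW
    ring
  · rw [if_neg h, if_neg h]
    simp

lemma aux_y_bound {s : ℝ} (hs : 0 ≤ s) (k : ℤ) (p : ℤ × ℤ × ℤ) :
    auxWt s k * auxY s k p ^ 2 ≤
      (if p.1 + p.2.1 + p.2.2 = k then
        ee p.2.2 * ee (p.1 + p.2.2) + ee p.2.2 * ee (p.2.1 + p.2.2) else 0) := by
  unfold auxY
  by_cases h : auxCond k p
  · rw [if_pos h, if_pos h.1]
    have hW : ((auxW s p) ^ (-(1/2) : ℝ)) ^ 2 = (auxW s p)⁻¹ := by
      rw [← ENNReal.rpow_natCast ((auxW s p) ^ (-(1/2) : ℝ)) 2, ← ENNReal.rpow_mul]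
      norm_num
      rw [ENNReal.rpow_neg_one]
    rw [mul_pow, hW, ← ENNReal.inv_pow]
    have hle : k.natAbs ≤ p.1.natAbs := by
      have := h.2.2.2
      omega
    calc auxWt s k * ((auxW s p)⁻¹ * ((auxD p ^ 2)⁻¹))
        = (auxWt s k * (auxW s p)⁻¹) * (auxD p ^ 2)⁻¹ := by rw [mul_assoc]
      _ ≤ ENNReal.ofReal (1 + (p.1:ℝ)^2) * (auxD p ^ 2)⁻¹ := by
          apply mul_le_mul_left
          have := boundA (k := k) (k1 := p.1) (k2 := p.2.1) (k3 := p.2.2) hs hle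
          unfold auxWt auxW
          unfold auxWt
          exact this
      _ ≤ ee p.2.2 * ee (p.1 + p.2.2) + ee p.2.2 * ee (p.2.1 + p.2.2) := by
          have := boundB (k1 := p.1) (k2 := p.2.1) (k3 := p.2.2) h.2.1 h.2.2.1
          unfold auxD
          exact this
  · rw [if_neg h]
    simp

/-- Summing the comparison kernel. -/
lemma aux_Esum (k : ℤ) :
    (∑' p : ℤ × ℤ × ℤ, if p.1 + p.2.1 + p.2.2 = k then
        ee p.2.2 * ee (p.1 + p.2.2) + ee p.2.2 * ee (p.2.1 + p.2.2) else 0)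
      = Zc * Zc + Zc * Zc := by
  have hZsub : ∀ m : ℤ, (∑' n : ℤ, ee (m - n)) = Zc := by
    intro m
    calc (∑' n : ℤ, ee (m - n)) = ∑' n : ℤ, ee ((Equiv.subLeft m) n) := by
          exact tsum_congr fun n => rfl
      _ = Zc := (Equiv.subLeft m).tsum_eq ee
  have hZadd : ∀ m : ℤ, (∑' n : ℤ, ee (n + m)) = Zc := by
    intro m
    calc (∑' n : ℤ, ee (n + m)) = ∑' n : ℤ, ee ((Equiv.addRight m) n) := by
          exact tsum_congr fun n => rfl
      _ = Zc := (Equiv.addRight m).tsum_eq ee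
  rw [ENNReal.tsum_prod']
  rw [ENNReal.tsum_comm]
  have hinner : ∀ bc : ℤ × ℤ, (∑' a : ℤ, if a + bc.1 + bc.2 = k then
      ee bc.2 * ee (a + bc.2) + ee bc.2 * ee (bc.1 + bc.2) else 0)
      = ee bc.2 * ee (k - bc.1) + ee bc.2 * ee (bc.1 + bc.2) := by
    intro bc
    rw [tsum_eq_single (k - bc.1 - bc.2) (fun a ha => if_neg (fun h => ha (by omega)))]
    rw [if_pos (by ring)]
    have harg : k - bc.1 - bc.2 + bc.2 = k - bc.1 := by ring
    rw [harg]
  calc (∑' (bc : ℤ × ℤ) (a : ℤ), if a + bc.1 + bc.2 = k then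
        ee bc.2 * ee (a + bc.2) + ee bc.2 * ee (bc.1 + bc.2) else 0)
      = ∑' bc : ℤ × ℤ, (ee bc.2 * ee (k - bc.1) + ee bc.2 * ee (bc.1 + bc.2)) :=
        tsum_congr hinner
    _ = (∑' bc : ℤ × ℤ, ee bc.2 * ee (k - bc.1)) +
          ∑' bc : ℤ × ℤ, ee bc.2 * ee (bc.1 + bc.2) := ENNReal.tsum_add
    _ = Zc * Zc + Zc * Zc := by
        have hS1 : (∑' bc : ℤ × ℤ, ee bc.2 * ee (k - bc.1)) = Zc * Zc := by
          rw [ENNReal.tsum_prod']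
          calc (∑' (b : ℤ) (c : ℤ), ee c * ee (k - b))
              = ∑' b : ℤ, Zc * ee (k - b) :=
                tsum_congr fun b => by rw [ENNReal.tsum_mul_right]; rfl
            _ = Zc * ∑' b : ℤ, ee (k - b) := ENNReal.tsum_mul_left
            _ = Zc * Zc := by rw [hZsub]
        have hS2 : (∑' bc : ℤ × ℤ, ee bc.2 * ee (bc.1 + bc.2)) = Zc * Zc := by
          rw [ENNReal.tsum_prod']
          rw [ENNReal.tsum_comm]
          calc (∑' (c : ℤ) (b : ℤ), ee c * ee (b + c))
              = ∑' c : ℤ, ee c * ∑' b : ℤ, ee (b + c) :=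
                tsum_congr fun c => ENNReal.tsum_mul_left
            _ = ∑' c : ℤ, ee c * Zc := tsum_congr fun c => by rw [hZadd]
            _ = Zc * Zc := by rw [ENNReal.tsum_mul_right]; rfl
        rw [hS1, hS2]

lemma aux_Gsum (s : ℝ) (a b c : ℤ → ℝ≥0) :
    (∑' (k : ℤ) (p : ℤ × ℤ × ℤ), (if auxCond k p then auxG s a b c p else 0))
      ≤ (∑' k : ℤ, auxWt (s-1) k * (a k : ℝ≥0∞)^2) *
          (∑' k : ℤ, auxWt s k * (b k : ℝ≥0∞)^2) *
          (∑' k : ℤ, auxWt s k * (c k : ℝ≥0∞)^2) := by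
  calc (∑' (k : ℤ) (p : ℤ × ℤ × ℤ), (if auxCond k p then auxG s a b c p else 0))
      ≤ ∑' (k : ℤ) (p : ℤ × ℤ × ℤ),
          (if p.1 + p.2.1 + p.2.2 = k then auxG s a b c p else 0) := by
        refine ENNReal.tsum_le_tsum fun k => ENNReal.tsum_le_tsum fun p => ?_
        by_cases h : auxCond k p
        · rw [if_pos h, if_pos h.1]
        · rw [if_neg h]; exact zero_le
    _ = ∑' (p : ℤ × ℤ × ℤ) (k : ℤ),
          (if p.1 + p.2.1 + p.2.2 = k then auxG s a b c p else 0) := ENNReal.tsum_comm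
    _ = ∑' p : ℤ × ℤ × ℤ, auxG s a b c p := by
        refine tsum_congr fun p => ?_
        rw [tsum_eq_single (p.1 + p.2.1 + p.2.2) (fun k hk => if_neg (fun h => hk h.symm))]
        rw [if_pos rfl]
    _ = (∑' k : ℤ, auxWt (s-1) k * (a k : ℝ≥0∞)^2) *
          (∑' k : ℤ, auxWt s k * (b k : ℝ≥0∞)^2) *
          (∑' k : ℤ, auxWt s k * (c k : ℝ≥0∞)^2) := by
        rw [ENNReal.tsum_prod']
        unfold auxG
        calc (∑' (x : ℤ) (p : ℤ × ℤ), auxWt (s-1) x * (a x : ℝ≥0∞)^2 *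
                (auxWt s p.1 * (b p.1 : ℝ≥0∞)^2) * (auxWt s p.2 * (c p.2 : ℝ≥0∞)^2))
            = ∑' x : ℤ, auxWt (s-1) x * (a x : ℝ≥0∞)^2 *
                ((∑' k : ℤ, auxWt s k * (b k : ℝ≥0∞)^2) *
                  (∑' k : ℤ, auxWt s k * (c k : ℝ≥0∞)^2)) := by
              refine tsum_congr fun x => ?_
              rw [ENNReal.tsum_prod']
              calc (∑' (y : ℤ) (z : ℤ), auxWt (s-1) x * (a x : ℝ≥0∞)^2 *
                      (auxWt s y * (b y : ℝ≥0∞)^2) * (auxWt s z * (c z : ℝ≥0∞)^2))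
                  = ∑' y : ℤ, (auxWt (s-1) x * (a x : ℝ≥0∞)^2 *
                      (auxWt s y * (b y : ℝ≥0∞)^2)) *
                        (∑' k : ℤ, auxWt s k * (c k : ℝ≥0∞)^2) :=
                    tsum_congr fun y => ENNReal.tsum_mul_left
                _ = (∑' y : ℤ, auxWt (s-1) x * (a x : ℝ≥0∞)^2 *
                      (auxWt s y * (b y : ℝ≥0∞)^2)) *
                        (∑' k : ℤ, auxWt s k * (c k : ℝ≥0∞)^2) := ENNReal.tsum_mul_right
                _ = (auxWt (s-1) x * (a x : ℝ≥0∞)^2 *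
                      (∑' k : ℤ, auxWt s k * (b k : ℝ≥0∞)^2)) *
                        (∑' k : ℤ, auxWt s k * (c k : ℝ≥0∞)^2) := by
                    rw [ENNReal.tsum_mul_left]
                _ = auxWt (s-1) x * (a x : ℝ≥0∞)^2 *
                      ((∑' k : ℤ, auxWt s k * (b k : ℝ≥0∞)^2) *
                        (∑' k : ℤ, auxWt s k * (c k : ℝ≥0∞)^2)) := by ring
          _ = (∑' k : ℤ, auxWt (s-1) k * (a k : ℝ≥0∞)^2) *
                ((∑' k : ℤ, auxWt s k * (b k : ℝ≥0∞)^2) *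
                  (∑' k : ℤ, auxWt s k * (c k : ℝ≥0∞)^2)) := ENNReal.tsum_mul_right
          _ = _ := by ring

theorem stmt7 (s : ℝ) (hs : 0 ≤ s) :
    ∃ C : ℝ, 0 < C ∧ ∀ a b c : ℤ → NNReal,
      HsE s (fun k =>
        if k = 0 then 0 else
          ∑' p : ℤ × ℤ × ℤ,
            if p.1 + p.2.1 + p.2.2 = k ∧
               (p.1 + p.2.1) * (p.1 + p.2.2) * (p.2.1 + p.2.2) ≠ 0 ∧
               p.2.2 ≠ 0 ∧
               p.1.natAbs = max k.natAbs (max p.1.natAbs (max p.2.1.natAbs p.2.2.natAbs))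
            then (a p.1 : ℝ≥0∞) * (b p.2.1 : ℝ≥0∞) * (c p.2.2 : ℝ≥0∞) /
                ((p.2.2.natAbs : ℝ≥0∞) *
                  ((3 * (p.1 + p.2.1) * (p.1 + p.2.2) * (p.2.1 + p.2.2)).natAbs : ℝ≥0∞))
            else 0)
      ≤ ENNReal.ofReal C * HsE (s - 1) (fun k => (a k : ℝ≥0∞)) *
          HsE s (fun k => (b k : ℝ≥0∞)) * HsE s (fun k => (c k : ℝ≥0∞)) := by
  classical
  set M : ℝ≥0∞ := Zc * Zc + Zc * Zc with hM
  have hMtop : M ≠ ⊤ := by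
    rw [hM]
    exact ENNReal.add_ne_top.2 ⟨ENNReal.mul_ne_top Zc_ne_top Zc_ne_top,
      ENNReal.mul_ne_top Zc_ne_top Zc_ne_top⟩
  have hMhalf : M ^ (1/2 : ℝ) ≠ ⊤ := ENNReal.rpow_ne_top_of_nonneg (by norm_num) hMtop
  refine ⟨(M ^ (1/2 : ℝ)).toReal + 1,
    add_pos_of_nonneg_of_pos ENNReal.toReal_nonneg one_pos, ?_⟩
  intro a b c
  set C : ℝ := (M ^ (1/2 : ℝ)).toReal + 1 with hC
  have hMC : M ^ (1/2 : ℝ) ≤ ENNReal.ofReal C := by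
    calc M ^ (1/2 : ℝ) = ENNReal.ofReal ((M ^ (1/2 : ℝ)).toReal) :=
          (ENNReal.ofReal_toReal hMhalf).symm
      _ ≤ ENNReal.ofReal C := ENNReal.ofReal_le_ofReal (by rw [hC]; linarith)
  set A2 : ℝ≥0∞ := ∑' k : ℤ, ENNReal.ofReal ((1 + (k:ℝ)^2)^(s-1)) * (a k : ℝ≥0∞)^2 with hA2
  set B2 : ℝ≥0∞ := ∑' k : ℤ, ENNReal.ofReal ((1 + (k:ℝ)^2)^s) * (b k : ℝ≥0∞)^2 with hB2
  set C2 : ℝ≥0∞ := ∑' k : ℤ, ENNReal.ofReal ((1 + (k:ℝ)^2)^s) * (c k : ℝ≥0∞)^2 with hC2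
  -- the key pointwise bound
  have key : ∀ k : ℤ, ENNReal.ofReal ((1 + (k:ℝ)^2)^s) *
      (if k = 0 then 0 else
        ∑' p : ℤ × ℤ × ℤ,
          if p.1 + p.2.1 + p.2.2 = k ∧
             (p.1 + p.2.1) * (p.1 + p.2.2) * (p.2.1 + p.2.2) ≠ 0 ∧
             p.2.2 ≠ 0 ∧
             p.1.natAbs = max k.natAbs (max p.1.natAbs (max p.2.1.natAbs p.2.2.natAbs))
          then (a p.1 : ℝ≥0∞) * (b p.2.1 : ℝ≥0∞) * (c p.2.2 : ℝ≥0∞) /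
              ((p.2.2.natAbs : ℝ≥0∞) *
                ((3 * (p.1 + p.2.1) * (p.1 + p.2.2) * (p.2.1 + p.2.2)).natAbs : ℝ≥0∞))
          else 0)^2
      ≤ (∑' p : ℤ × ℤ × ℤ, auxX s a b c k p ^ 2) * M := by
    intro k
    by_cases hk0 : k = 0
    · rw [if_pos hk0]
      rw [zero_pow (by norm_num), mul_zero]
      exact zero_le
    rw [if_neg hk0]
    have hfe : (∑' p : ℤ × ℤ × ℤ,
        if p.1 + p.2.1 + p.2.2 = k ∧
           (p.1 + p.2.1) * (p.1 + p.2.2) * (p.2.1 + p.2.2) ≠ 0 ∧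
           p.2.2 ≠ 0 ∧
           p.1.natAbs = max k.natAbs (max p.1.natAbs (max p.2.1.natAbs p.2.2.natAbs))
        then (a p.1 : ℝ≥0∞) * (b p.2.1 : ℝ≥0∞) * (c p.2.2 : ℝ≥0∞) /
            ((p.2.2.natAbs : ℝ≥0∞) *
              ((3 * (p.1 + p.2.1) * (p.1 + p.2.2) * (p.2.1 + p.2.2)).natAbs : ℝ≥0∞))
        else 0)
        = ∑' p : ℤ × ℤ × ℤ, auxX s a b c k p * auxY s k p := by
      refine tsum_congr fun p => ?_
      rw [← aux_xy s a b c k p]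
      exact if_congr Iff.rfl rfl rfl
    rw [hfe]
    have hys : ENNReal.ofReal ((1 + (k:ℝ)^2)^s) * (∑' p : ℤ × ℤ × ℤ, auxY s k p ^ 2) ≤ M := by
      calc ENNReal.ofReal ((1 + (k:ℝ)^2)^s) * (∑' p : ℤ × ℤ × ℤ, auxY s k p ^ 2)
          = ∑' p : ℤ × ℤ × ℤ, auxWt s k * auxY s k p ^ 2 := ENNReal.tsum_mul_left.symm
        _ ≤ ∑' p : ℤ × ℤ × ℤ, (if p.1 + p.2.1 + p.2.2 = k then
              ee p.2.2 * ee (p.1 + p.2.2) + ee p.2.2 * ee (p.2.1 + p.2.2) else 0) :=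
            ENNReal.tsum_le_tsum fun p => aux_y_bound hs k p
        _ = M := by rw [aux_Esum k, hM]
    calc ENNReal.ofReal ((1 + (k:ℝ)^2)^s) * (∑' p : ℤ × ℤ × ℤ, auxX s a b c k p * auxY s k p)^2
        ≤ ENNReal.ofReal ((1 + (k:ℝ)^2)^s) *
            ((∑' p : ℤ × ℤ × ℤ, auxX s a b c k p ^ 2) *
              (∑' p : ℤ × ℤ × ℤ, auxY s k p ^ 2)) :=
          mul_le_mul_right (aux_cs _ _) _
      _ = (∑' p : ℤ × ℤ × ℤ, auxX s a b c k p ^ 2) *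
            (ENNReal.ofReal ((1 + (k:ℝ)^2)^s) * (∑' p : ℤ × ℤ × ℤ, auxY s k p ^ 2)) := by ring
      _ ≤ (∑' p : ℤ × ℤ × ℤ, auxX s a b c k p ^ 2) * M := mul_le_mul_right hys _
  -- summing over k
  have total : (∑' k : ℤ, ENNReal.ofReal ((1 + (k:ℝ)^2)^s) *
      (if k = 0 then 0 else
        ∑' p : ℤ × ℤ × ℤ,
          if p.1 + p.2.1 + p.2.2 = k ∧
             (p.1 + p.2.1) * (p.1 + p.2.2) * (p.2.1 + p.2.2) ≠ 0 ∧
             p.2.2 ≠ 0 ∧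
             p.1.natAbs = max k.natAbs (max p.1.natAbs (max p.2.1.natAbs p.2.2.natAbs))
          then (a p.1 : ℝ≥0∞) * (b p.2.1 : ℝ≥0∞) * (c p.2.2 : ℝ≥0∞) /
              ((p.2.2.natAbs : ℝ≥0∞) *
                ((3 * (p.1 + p.2.1) * (p.1 + p.2.2) * (p.2.1 + p.2.2)).natAbs : ℝ≥0∞))
          else 0)^2)
      ≤ A2 * B2 * C2 * M := by
    calc _ ≤ ∑' k : ℤ, (∑' p : ℤ × ℤ × ℤ, auxX s a b c k p ^ 2) * M :=
          ENNReal.tsum_le_tsum key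
      _ = (∑' (k : ℤ) (p : ℤ × ℤ × ℤ), auxX s a b c k p ^ 2) * M := ENNReal.tsum_mul_right
      _ ≤ A2 * B2 * C2 * M := by
          apply mul_le_mul_left
          have h1 : (∑' (k : ℤ) (p : ℤ × ℤ × ℤ), auxX s a b c k p ^ 2)
              = ∑' (k : ℤ) (p : ℤ × ℤ × ℤ), (if auxCond k p then auxG s a b c p else 0) :=
            tsum_congr fun k => tsum_congr fun p => aux_x_sq s a b c k p
          rw [h1, hA2, hB2, hC2]
          exact aux_Gsum s a b c
  -- conclude
  show HsE s _ ≤ _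
  have hlhs : HsE s (fun k =>
      if k = 0 then 0 else
        ∑' p : ℤ × ℤ × ℤ,
          if p.1 + p.2.1 + p.2.2 = k ∧
             (p.1 + p.2.1) * (p.1 + p.2.2) * (p.2.1 + p.2.2) ≠ 0 ∧
             p.2.2 ≠ 0 ∧
             p.1.natAbs = max k.natAbs (max p.1.natAbs (max p.2.1.natAbs p.2.2.natAbs))
          then (a p.1 : ℝ≥0∞) * (b p.2.1 : ℝ≥0∞) * (c p.2.2 : ℝ≥0∞) /
              ((p.2.2.natAbs : ℝ≥0∞) *
                ((3 * (p.1 + p.2.1) * (p.1 + p.2.2) * (p.2.1 + p.2.2)).natAbs : ℝ≥0∞))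
          else 0)
      ≤ (A2 * B2 * C2 * M) ^ (1/2 : ℝ) := by
    unfold HsE
    exact ENNReal.rpow_le_rpow total (by norm_num)
  have hrhs : (A2 * B2 * C2 * M) ^ (1/2 : ℝ)
      ≤ ENNReal.ofReal C * A2 ^ (1/2 : ℝ) * B2 ^ (1/2 : ℝ) * C2 ^ (1/2 : ℝ) := by
    rw [ENNReal.mul_rpow_of_nonneg _ _ (by norm_num : (0:ℝ) ≤ 1/2),
      ENNReal.mul_rpow_of_nonneg _ _ (by norm_num : (0:ℝ) ≤ 1/2),
      ENNReal.mul_rpow_of_nonneg _ _ (by norm_num : (0:ℝ) ≤ 1/2)]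
    calc A2 ^ (1/2:ℝ) * B2 ^ (1/2:ℝ) * C2 ^ (1/2:ℝ) * M ^ (1/2:ℝ)
        ≤ A2 ^ (1/2:ℝ) * B2 ^ (1/2:ℝ) * C2 ^ (1/2:ℝ) * ENNReal.ofReal C :=
          mul_le_mul_right hMC _
      _ = ENNReal.ofReal C * A2 ^ (1/2:ℝ) * B2 ^ (1/2:ℝ) * C2 ^ (1/2:ℝ) := by ring
  exact le_trans hlhs (le_trans hrhs (by rw [HsE, HsE, HsE]))
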